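/- With Φ(r) = −(r·E_p) exp(i k₀ û·r) and Ã(r) = −k₀ (r·E_p) exp(i k₀ û·r) û, where û·E_p = 0 and ‖û‖ = 1, the Lorenz gauge condition ∇·Ã = i k₀² Φ holds. -/

import Mathlib

open Finset

/-- Euclidean dot product on ℝ³. -/
def rdot (a b : Fin 3 → ℝ) : ℝ := ∑ i, a i * b i

/-- Partial derivative of a complex scalar field on ℝ³ in direction `i`. -/
noncomputable def pdC (i : Fin 3) (f : (Fin 3 → ℝ) → ℂ) (x : Fin 3 → ℝ) : ℂ :=
  fderiv ℝ f x (Pi.single i 1)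

noncomputable def Lv (v : Fin 3 → ℝ) : (Fin 3 → ℝ) →L[ℝ] ℂ :=
  Complex.ofRealCLM.comp (∑ i, (v i) • (ContinuousLinearMap.proj i : (Fin 3 → ℝ) →L[ℝ] ℝ))

lemma hasfd (v : Fin 3 → ℝ) (x : Fin 3 → ℝ) :
    HasFDerivAt (fun s => ((rdot s v : ℝ) : ℂ)) (Lv v) x := by
  have h : HasFDerivAt (fun s : Fin 3 → ℝ => rdot s v)
      (∑ i, (v i) • (ContinuousLinearMap.proj i : (Fin 3 → ℝ) →L[ℝ] ℝ)) x := by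
    unfold rdot
    apply HasFDerivAt.fun_sum
    intro i _
    simpa [mul_comm] using ((hasFDerivAt_apply i x).const_mul (v i))
  exact Complex.ofRealCLM.hasFDerivAt.comp x h

lemma Lv_single (v : Fin 3 → ℝ) (j : Fin 3) : Lv v (Pi.single j 1) = (v j : ℂ) := by
  simp [Lv, ContinuousLinearMap.sum_apply, Pi.single_apply, mul_ite]

lemma rdot_comm (a b : Fin 3 → ℝ) : rdot a b = rdot b a := by
  unfold rdot; simp [mul_comm]

/-- With `Φ(r) = −(r·E_p) exp(i k₀ û·r)` and `Ã(r) = −k₀ (r·E_p) exp(i k₀ û·r) û`,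
where `û·E_p = 0` and `‖û‖ = 1`, the Lorenz gauge condition `∇·Ã = i k₀² Φ` holds. -/
theorem plane_wave_lorenz_gauge (k₀ : ℝ) (hk : 0 < k₀)
    (u Ep : Fin 3 → ℝ) (hu : rdot u u = 1) (hperp : rdot u Ep = 0) :
    ∀ r : Fin 3 → ℝ,
      (∑ j, pdC j (fun s => -(k₀ : ℂ) * ((rdot s Ep : ℝ) : ℂ)
          * Complex.exp (Complex.I * k₀ * rdot u s) * ((u j : ℝ) : ℂ)) r)
        = Complex.I * (k₀ : ℂ) ^ 2
            * (-((rdot r Ep : ℝ) : ℂ) * Complex.exp (Complex.I * k₀ * rdot u r)) := by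
  intro r
  have key : ∀ j : Fin 3, pdC j (fun s => -(k₀ : ℂ) * ((rdot s Ep : ℝ) : ℂ)
      * Complex.exp (Complex.I * k₀ * rdot u s) * ((u j : ℝ) : ℂ)) r
      = (-(k₀:ℂ) * (Ep j : ℂ) * Complex.exp (Complex.I * k₀ * rdot u r)
          + -(k₀:ℂ) * ((rdot r Ep : ℝ):ℂ)
            * (Complex.exp (Complex.I * k₀ * rdot u r) * (Complex.I * k₀ * (u j : ℂ))))
        * (u j : ℂ) := by
    intro j
    have h1 : HasFDerivAt (fun s => -(k₀:ℂ) * ((rdot s Ep : ℝ) : ℂ))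
        ((-(k₀:ℂ)) • Lv Ep) r := (hasfd Ep r).const_mul (-(k₀:ℂ))
    have h2 : HasFDerivAt (fun s : Fin 3 → ℝ => Complex.I * k₀ * ((rdot u s : ℝ):ℂ))
        ((Complex.I * k₀) • Lv u) r := by
      have := (hasfd u r).const_mul (Complex.I * k₀)
      simpa [rdot_comm] using this
    have hexp : HasFDerivAt (fun s : Fin 3 → ℝ => Complex.exp (Complex.I * k₀ * rdot u s))
        ((Complex.exp (Complex.I * k₀ * rdot u r)) • ((Complex.I * k₀) • Lv u)) r := h2.cexp
    have hprod := (h1.mul hexp).mul_const ((u j : ℝ) : ℂ)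
    have := hprod.fderiv
    simp only [Pi.mul_apply] at this
    simp only [pdC, this]
    simp [ContinuousLinearMap.smul_apply, Lv_single, smul_eq_mul]
    ring
  simp only [key]
  have hu' : ((u 0 : ℂ))^2 + (u 1 : ℂ)^2 + (u 2 : ℂ)^2 = 1 := by
    have := hu
    unfold rdot at this
    rw [Fin.sum_univ_three] at this
    have : ((u 0 * u 0 + u 1 * u 1 + u 2 * u 2 : ℝ) : ℂ) = 1 := by rw [this]; norm_num
    push_cast at this
    linear_combination this
  have hperp' : (u 0 : ℂ) * Ep 0 + (u 1 : ℂ) * Ep 1 + (u 2 : ℂ) * Ep 2 = 0 := by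
    have := hperp
    unfold rdot at this
    rw [Fin.sum_univ_three] at this
    have : ((u 0 * Ep 0 + u 1 * Ep 1 + u 2 * Ep 2 : ℝ) : ℂ) = 0 := by rw [this]; norm_num
    push_cast at this
    linear_combination this
  rw [Fin.sum_univ_three]
  linear_combination (-(k₀:ℂ) * Complex.exp (Complex.I * k₀ * rdot u r)) * hperp'
    + (-Complex.I * k₀^2 * ((rdot r Ep : ℝ):ℂ) * Complex.exp (Complex.I * k₀ * rdot u r)) * hu'
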